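/- arXiv:0802.1571 — 2 statements merged into one kernel-verified Lean document; each statement's English description precedes it below -/
import Mathlib

section
/- (Fundamental Inequality, upper bound.) Let X be a finite n-dimensional simplicial complex satisfying condition (1_X), let 1 ≤ i ≤ n−1, and let λ > 0 be a real number such that (Δ_u g, g)_u ≤ λ·(g, g)_u for every vertex u of X and every g ∈ C^{i−1}(Lk(u)). Then for every f ∈ C^i(X), i·(Δf, f) ≤ ((i+1)·λ − (n−i))·(f, f); in particular, every eigenvalue c of Δ acting on C^i(X) satisfies i·c ≤ (i+1)·λ − (n−i). -/
open Finset

open scoped Classical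

variable {V : Type*}

/-- A (finite) simplicial complex on the vertex type `V`: a collection of nonempty
finite sets of vertices (the simplices) closed under passing to nonempty subsets. -/
def IsComplex [DecidableEq V] (K : Finset (Finset V)) : Prop :=
  (∀ s ∈ K, s.Nonempty) ∧ ∀ s ∈ K, ∀ t : Finset V, t ⊆ s → t.Nonempty → t ∈ K

/-- `K` is `n`-dimensional and satisfies condition `(1_X)`: every simplex has dimension
at most `n` and is a face of some `n`-dimensional simplex (one of cardinality `n+1`). -/
def IsPureDim [DecidableEq V] (K : Finset (Finset V)) (n : ℕ) : Prop :=
  (∀ s ∈ K, s.card ≤ n + 1) ∧ ∀ s ∈ K, ∃ t ∈ K, s ⊆ t ∧ t.card = n + 1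

/-- `wt K n s` : the number `w(s)` of `n`-dimensional simplices of `K` containing `s`. -/
noncomputable def wt [DecidableEq V] (K : Finset (Finset V)) (n : ℕ) (s : Finset V) : ℕ :=
  (K.filter fun t => s ⊆ t ∧ t.card = n + 1).card

/-- An `m`-tuple of vertices is allowed when its entries are distinct and form a simplex
of `K`; i.e. it is an oriented `(m-1)`-simplex of `K`. -/
def Allowed [DecidableEq V] [Fintype V] (K : Finset (Finset V)) {m : ℕ}
    (v : Fin m → V) : Prop :=
  Function.Injective v ∧ Finset.image v Finset.univ ∈ K

/-- `f` is an `(m-1)`-cochain on `K`: a real-valued alternating function on oriented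
`(m-1)`-simplices of `K` (realized as a function on all `m`-tuples of vertices which is
alternating and vanishes on tuples which are not oriented simplices of `K`). -/
def IsCochain [DecidableEq V] [Fintype V] (K : Finset (Finset V)) (m : ℕ)
    (f : (Fin m → V) → ℝ) : Prop :=
  (∀ (σ : Equiv.Perm (Fin m)) (v : Fin m → V),
      f (v ∘ σ) = ((Equiv.Perm.sign σ : ℤ) : ℝ) * f v) ∧
  ∀ v : Fin m → V, ¬ Allowed K v → f v = 0

/-- The inner product `(f,g) = ∑_s w(s)·f(s)·g(s)` on `(m-1)`-cochains, the sum being over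
the unoriented `(m-1)`-simplices `s` of `K` (each with an arbitrarily chosen orientation);
summing over all `m`-tuples counts each simplex `m!` times, whence the normalization. -/
noncomputable def innerC [DecidableEq V] [Fintype V] (K : Finset (Finset V)) (n m : ℕ)
    (f g : (Fin m → V) → ℝ) : ℝ :=
  (∑ v : Fin m → V, (wt K n (Finset.image v Finset.univ) : ℝ) * f v * g v) /
    (Nat.factorial m : ℝ)

/-- The coboundary `d : C^{m-1}(K) → C^m(K)`. -/
noncomputable def cobound [DecidableEq V] [Fintype V] (K : Finset (Finset V)) {m : ℕ}
    (f : (Fin m → V) → ℝ) : (Fin (m + 1) → V) → ℝ :=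
  fun v => if Allowed K v then
    ∑ j : Fin (m + 1), (-1 : ℝ) ^ (j : ℕ) * f (v ∘ Fin.succAbove j)
  else 0

/-- The operator `δ : C^m(K) → C^{m-1}(K)`,
`(δf)(s) = ∑_x (w([x,s])/w(s))·f([x,s])`, the sum being over the vertices `x`
such that `[x,s]` is an oriented simplex of `K`. -/
noncomputable def codiff [DecidableEq V] [Fintype V] (K : Finset (Finset V)) (n : ℕ) {m : ℕ}
    (f : (Fin (m + 1) → V) → ℝ) : (Fin m → V) → ℝ :=
  fun s => ∑ x : V,
    if Allowed K (Fin.cons x s) then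
      ((wt K n (Finset.image (Fin.cons x s) Finset.univ) : ℝ) /
          (wt K n (Finset.image s Finset.univ) : ℝ)) * f (Fin.cons x s)
    else 0

/-- The Laplace operator `Δ = δ ∘ d` on `(m-1)`-cochains. -/
noncomputable def lap [DecidableEq V] [Fintype V] (K : Finset (Finset V)) (n : ℕ) {m : ℕ}
    (f : (Fin m → V) → ℝ) : (Fin m → V) → ℝ :=
  codiff K n (cobound K f)

/-- `ρ_v : C^{m-1}(K) → C^{m-1}(K)`: `(ρ_v f)(s) = f(s)` if `v` is a vertex of `s`,
and `0` otherwise. -/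
noncomputable def rho [DecidableEq V] {m : ℕ} (v : V) (f : (Fin m → V) → ℝ) :
    (Fin m → V) → ℝ :=
  fun s => if ∃ j, s j = v then f s else 0

/-- The vertices of `K`. -/
noncomputable def verts [DecidableEq V] [Fintype V] (K : Finset (Finset V)) : Finset V :=
  Finset.univ.filter fun v => {v} ∈ K

/-- The link `Lk(v)` of a vertex `v`: all simplices `s` of `K` with `v ∉ s` and
`s ∪ {v} ∈ K`. -/
noncomputable def linkK [DecidableEq V] (K : Finset (Finset V)) (v : V) :
    Finset (Finset V) :=
  K.filter fun s => v ∉ s ∧ insert v s ∈ K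

/-- `τ_v : C^{m}(K) → C^{m-1}(Lk(v))`: `(τ_v f)(s) = f([v,s])` for `s` an oriented
simplex of the link `Lk(v)`. -/
noncomputable def tau [DecidableEq V] [Fintype V] (K : Finset (Finset V)) (v : V) {m : ℕ}
    (f : (Fin (m + 1) → V) → ℝ) : (Fin m → V) → ℝ :=
  fun s => if Allowed (linkK K v) s then f (Fin.cons v s) else 0

/-- `c` is an eigenvalue of the Laplace operator acting on `(m-1)`-cochains of `K`. -/
def IsEigen [DecidableEq V] [Fintype V] (K : Finset (Finset V)) (n m : ℕ) (c : ℝ) : Prop :=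
  ∃ f : (Fin m → V) → ℝ, f ≠ 0 ∧ IsCochain K m f ∧ lap K n f = c • f
set_option linter.unusedSectionVars false
set_option maxHeartbeats 1000000

section Aux

variable [DecidableEq V] [Fintype V]

open Equiv

lemma image_comp_perm {m : ℕ} (v : Fin m → V) (σ : Equiv.Perm (Fin m)) :
    Finset.image (v ∘ σ) Finset.univ = Finset.image v Finset.univ := by
  ext y
  simp only [Finset.mem_image, Finset.mem_univ, true_and, Function.comp_apply]
  constructor
  · rintro ⟨k, rfl⟩; exact ⟨σ k, rfl⟩
  · rintro ⟨k, rfl⟩; exact ⟨σ.symm k, by simp⟩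

lemma allowed_comp_perm {K : Finset (Finset V)} {m : ℕ} (σ : Equiv.Perm (Fin m))
    (v : Fin m → V) : Allowed K (v ∘ σ) ↔ Allowed K v := by
  unfold Allowed
  rw [image_comp_perm]
  constructor
  · rintro ⟨h1, h2⟩
    refine ⟨?_, h2⟩
    have : v = (v ∘ σ) ∘ σ.symm := by ext k; simp
    rw [this]
    exact h1.comp σ.symm.injective
  · rintro ⟨h1, h2⟩
    exact ⟨h1.comp σ.injective, h2⟩

lemma sum_comp_perm {m : ℕ} (σ : Equiv.Perm (Fin m)) (G : (Fin m → V) → ℝ) :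
    ∑ v : Fin m → V, G (v ∘ σ) = ∑ v : Fin m → V, G v := by
  apply Fintype.sum_equiv (Equiv.arrowCongr σ.symm (Equiv.refl V))
  intro v
  congr 1

lemma sum_cons_split {m : ℕ} (G : (Fin (m + 1) → V) → ℝ) :
    ∑ t : Fin (m + 1) → V, G t = ∑ x : V, ∑ s : Fin m → V, G (Fin.cons x s) := by
  have h1 : ∑ p : V × (Fin m → V), G (Fin.cons p.1 p.2)
      = ∑ x : V, ∑ s : Fin m → V, G (Fin.cons x s) :=
    Fintype.sum_prod_type (f := fun p : V × (Fin m → V) => G (Fin.cons p.1 p.2))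
  rw [← h1]
  exact (Fintype.sum_equiv (Fin.consEquiv fun _ => V) _ _ (fun p => rfl)).symm

lemma image_cons {m : ℕ} (x : V) (s : Fin m → V) :
    Finset.image (Fin.cons x s : Fin (m + 1) → V) Finset.univ
      = insert x (Finset.image s Finset.univ) := by
  ext y
  simp only [Finset.mem_image, Finset.mem_univ, true_and, Finset.mem_insert]
  constructor
  · rintro ⟨k, rfl⟩
    refine Fin.cases ?_ ?_ k
    · left; simp
    · intro l; right; exact ⟨l, by simp⟩
  · rintro (rfl | ⟨k, rfl⟩)
    · exact ⟨0, by simp⟩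
    · exact ⟨k.succ, by simp⟩

lemma cons_injective_iff {m : ℕ} {x : V} {s : Fin m → V} :
    Function.Injective (Fin.cons x s : Fin (m + 1) → V) ↔
      Function.Injective s ∧ ∀ k, s k ≠ x := by
  constructor
  · intro h
    constructor
    · intro a b hab
      have h2 : (Fin.cons x s : Fin (m+1) → V) a.succ = (Fin.cons x s : Fin (m+1) → V) b.succ := by
        rwa [Fin.cons_succ, Fin.cons_succ]
      simpa using h h2
    · intro k hk
      have h2 : (Fin.cons x s : Fin (m+1) → V) k.succ = (Fin.cons x s : Fin (m+1) → V) 0 := by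
        rwa [Fin.cons_succ, Fin.cons_zero]
      exact absurd (h h2) (Fin.succ_ne_zero k)
  · rintro ⟨h1, h2⟩ a b hab
    induction a using Fin.cases with
    | zero =>
      induction b using Fin.cases with
      | zero => rfl
      | succ b' =>
        rw [Fin.cons_zero, Fin.cons_succ] at hab
        exact absurd hab.symm (h2 b')
    | succ a' =>
      induction b using Fin.cases with
      | zero =>
        rw [Fin.cons_succ, Fin.cons_zero] at hab
        exact absurd hab (h2 a')
      | succ b' =>
        rw [Fin.cons_succ, Fin.cons_succ] at hab
        rw [h1 hab]

end Aux
section Aux2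

variable [DecidableEq V] [Fintype V]

lemma allowed_comp_inj {K : Finset (Finset V)} (hcplx : IsComplex K) {m m' : ℕ}
    (hm' : 0 < m') {v : Fin m → V} (hv : Allowed K v) {g : Fin m' → Fin m}
    (hg : Function.Injective g) : Allowed K (v ∘ g) := by
  refine ⟨hv.1.comp hg, ?_⟩
  refine hcplx.2 _ hv.2 _ ?_ ?_
  · intro y hy
    simp only [Finset.mem_image, Finset.mem_univ, true_and] at hy ⊢
    obtain ⟨k, rfl⟩ := hy
    exact ⟨g k, rfl⟩
  · refine ⟨v (g ⟨0, hm'⟩), ?_⟩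
    simp only [Finset.mem_image, Finset.mem_univ, true_and]
    exact ⟨⟨0, hm'⟩, rfl⟩

lemma allowed_cons_tail {K : Finset (Finset V)} (hcplx : IsComplex K) {m : ℕ}
    (hm : 0 < m) {x : V} {s : Fin m → V} (h : Allowed K (Fin.cons x s)) :
    Allowed K s := by
  have h2 := allowed_comp_inj hcplx hm h (Fin.succ_injective m)
  have h3 : (Fin.cons x s : Fin (m+1) → V) ∘ Fin.succ = s := by
    ext k; simp
  rwa [h3] at h2

lemma wt_pos {K : Finset (Finset V)} {n : ℕ} (hpure : IsPureDim K n) {s : Finset V}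
    (hs : s ∈ K) : 1 ≤ wt K n s := by
  obtain ⟨t, ht, hst, hcard⟩ := hpure.2 s hs
  exact Finset.card_pos.2 ⟨t, Finset.mem_filter.2 ⟨ht, hst, hcard⟩⟩

/-- counting: `∑_x w(s ∪ x) = (n+1-m)·w(s)` for an `(m-1)`-simplex `s`. -/
lemma wt_insert_sum {K : Finset (Finset V)} (hcplx : IsComplex K) {n m : ℕ}
    {s : Finset V} (hs : s ∈ K) (hcard : s.card = m) :
    ∑ x : V, (if x ∉ s ∧ insert x s ∈ K then wt K n (insert x s) else 0)
      = (n + 1 - m) * wt K n s := by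
  have key : ∀ x : V,
      (if x ∉ s ∧ insert x s ∈ K then wt K n (insert x s) else 0)
        = ∑ t ∈ K, if (s ⊆ t ∧ t.card = n + 1) ∧ x ∈ t \ s then 1 else 0 := by
    intro x
    by_cases hx : x ∉ s ∧ insert x s ∈ K
    · rw [if_pos hx, wt, Finset.card_filter]
      apply Finset.sum_congr rfl
      intro t _
      congr 1
      rw [eq_iff_iff]
      constructor
      · rintro ⟨hsub, hc⟩
        refine ⟨⟨(Finset.insert_subset_iff.1 hsub).2, hc⟩, ?_⟩
        rw [Finset.mem_sdiff]
        exact ⟨(Finset.insert_subset_iff.1 hsub).1, hx.1⟩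
      · rintro ⟨⟨h1, h2⟩, h3⟩
        rw [Finset.mem_sdiff] at h3
        exact ⟨Finset.insert_subset h3.1 h1, h2⟩
    · rw [if_neg hx]
      symm
      apply Finset.sum_eq_zero
      intro t ht
      rw [if_neg]
      rintro ⟨⟨h1, h2⟩, h3⟩
      rw [Finset.mem_sdiff] at h3
      exact hx ⟨h3.2, hcplx.2 t ht _ (Finset.insert_subset h3.1 h1)
        (Finset.insert_nonempty _ _)⟩
  calc ∑ x : V, (if x ∉ s ∧ insert x s ∈ K then wt K n (insert x s) else 0)
      = ∑ x : V, ∑ t ∈ K, if (s ⊆ t ∧ t.card = n + 1) ∧ x ∈ t \ s then 1 else 0 :=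
        Finset.sum_congr rfl fun x _ => key x
    _ = ∑ t ∈ K, ∑ x : V, if (s ⊆ t ∧ t.card = n + 1) ∧ x ∈ t \ s then 1 else 0 :=
        Finset.sum_comm
    _ = ∑ t ∈ K, if s ⊆ t ∧ t.card = n + 1 then (n + 1 - m) else 0 := by
        refine Finset.sum_congr rfl fun t ht => ?_
        by_cases h : s ⊆ t ∧ t.card = n + 1
        · simp only [h, true_and, if_pos]
          rw [← Finset.sum_filter, Finset.sum_const, smul_eq_mul, mul_one,
            Finset.filter_univ_mem, Finset.card_sdiff_of_subset h.1, hcard, h.2]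
        · rw [if_neg h]
          apply Finset.sum_eq_zero
          intro x _
          rw [if_neg (fun hc => h hc.1)]
    _ = (n + 1 - m) * wt K n s := by
        rw [← Finset.sum_filter, Finset.sum_const, smul_eq_mul, wt, Nat.mul_comm]

end Aux2
section Aux3

variable [DecidableEq V] [Fintype V]

lemma linkK_isComplex {K : Finset (Finset V)} (hcplx : IsComplex K) (u : V) :
    IsComplex (linkK K u) := by
  constructor
  · intro s hs
    exact hcplx.1 s (Finset.mem_filter.1 hs).1
  · intro s hs t hts htne
    rw [linkK, Finset.mem_filter] at hs ⊢
    obtain ⟨hsK, hus, hins⟩ := hs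
    refine ⟨hcplx.2 s hsK t hts htne, fun hut => hus (hts hut), ?_⟩
    exact hcplx.2 _ hins _ (Finset.insert_subset_insert _ hts)
      (Finset.insert_nonempty _ _)

lemma linkK_empty {K : Finset (Finset V)} (hcplx : IsComplex K) {u : V}
    (hu : u ∉ verts K) : linkK K u = ∅ := by
  rw [Finset.eq_empty_iff_forall_notMem]
  intro s hs
  rw [linkK, Finset.mem_filter] at hs
  apply hu
  rw [verts, Finset.mem_filter]
  refine ⟨Finset.mem_univ u, hcplx.2 _ hs.2.2 {u} ?_ (Finset.singleton_nonempty u)⟩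
  simp

lemma wt_linkK {K : Finset (Finset V)} (hcplx : IsComplex K) {n : ℕ} (hn : 1 ≤ n)
    {u : V} {s : Finset V} (hus : u ∉ s) (hsne : s.Nonempty) :
    wt (linkK K u) (n - 1) s = wt K n (insert u s) := by
  have hn1 : n - 1 + 1 = n := Nat.succ_pred_eq_of_pos hn
  rw [wt, wt, hn1]
  apply Finset.card_bij (fun t _ => insert u t)
  · intro t ht
    rw [Finset.mem_filter] at ht ⊢
    obtain ⟨htl, hst, hcard⟩ := ht
    rw [linkK, Finset.mem_filter] at htl
    refine ⟨htl.2.2, Finset.insert_subset_insert _ hst, ?_⟩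
    rw [Finset.card_insert_of_notMem htl.2.1, hcard]
  · intro t1 ht1 t2 ht2 heq
    have h1 : u ∉ t1 := by
      have := (Finset.mem_filter.1 ht1).1
      rw [linkK, Finset.mem_filter] at this
      exact this.2.1
    have h2 : u ∉ t2 := by
      have := (Finset.mem_filter.1 ht2).1
      rw [linkK, Finset.mem_filter] at this
      exact this.2.1
    rw [← Finset.erase_insert h1, ← Finset.erase_insert h2, heq]
  · intro t' ht'
    rw [Finset.mem_filter] at ht'
    obtain ⟨ht'K, hsub, hcard⟩ := ht'
    have hut' : u ∈ t' := hsub (Finset.mem_insert_self u s)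
    refine ⟨t'.erase u, ?_, ?_⟩
    · rw [Finset.mem_filter]
      have herase : t'.erase u ∈ K := by
        apply hcplx.2 t' ht'K _ (Finset.erase_subset u t')
        rw [← Finset.card_pos, Finset.card_erase_of_mem hut', hcard]
        omega
      refine ⟨?_, ?_, ?_⟩
      · rw [linkK, Finset.mem_filter]
        exact ⟨herase, Finset.notMem_erase u t', by rwa [Finset.insert_erase hut']⟩
      · intro y hy
        exact Finset.mem_erase.2 ⟨fun h => hus (h ▸ hy), hsub (Finset.mem_insert_of_mem hy)⟩
      · rw [Finset.card_erase_of_mem hut', hcard]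
        omega
    · rw [Finset.insert_erase hut']

end Aux3
section Aux4

variable [DecidableEq V] [Fintype V]

lemma mem_image_tuple {m : ℕ} {s : Fin m → V} {x : V} :
    x ∈ Finset.image s Finset.univ ↔ ∃ k, s k = x := by
  simp

lemma image_tuple_nonempty {m : ℕ} (hm : 0 < m) (s : Fin m → V) :
    (Finset.image s Finset.univ).Nonempty :=
  ⟨s ⟨0, hm⟩, mem_image_tuple.2 ⟨⟨0, hm⟩, rfl⟩⟩

lemma allowed_cons_iff_link {K : Finset (Finset V)} (hcplx : IsComplex K) {m : ℕ}
    (hm : 0 < m) (u : V) (s : Fin m → V) :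
    Allowed (linkK K u) s ↔ Allowed K (Fin.cons u s) := by
  constructor
  · rintro ⟨hinj, hmem⟩
    rw [linkK, Finset.mem_filter] at hmem
    obtain ⟨hK, hus, hins⟩ := hmem
    refine ⟨?_, ?_⟩
    · rw [cons_injective_iff]
      exact ⟨hinj, fun k hk => hus (mem_image_tuple.2 ⟨k, hk⟩)⟩
    · rwa [image_cons]
  · rintro ⟨hinj, hmem⟩
    rw [cons_injective_iff] at hinj
    rw [image_cons] at hmem
    have hus : u ∉ Finset.image s Finset.univ := by
      rw [mem_image_tuple]
      rintro ⟨k, hk⟩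
      exact hinj.2 k hk
    refine ⟨hinj.1, ?_⟩
    rw [linkK, Finset.mem_filter]
    have hsK : Finset.image s Finset.univ ∈ K := by
      apply hcplx.2 _ hmem _ (Finset.subset_insert _ _) (image_tuple_nonempty hm s)
    exact ⟨hsK, hus, hmem⟩

end Aux4
section Aux5

variable [DecidableEq V] [Fintype V]

open Equiv Equiv.Perm

/-- sign of a permutation as a real number -/
noncomputable def sgn {m : ℕ} (σ : Equiv.Perm (Fin m)) : ℝ := ((Equiv.Perm.sign σ : ℤ) : ℝ)

lemma sgn_mul {m : ℕ} (σ τ : Equiv.Perm (Fin m)) : sgn (σ * τ) = sgn σ * sgn τ := by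
  unfold sgn
  rw [map_mul]
  push_cast
  rfl

lemma sgn_sq {m : ℕ} (σ : Equiv.Perm (Fin m)) : sgn σ * sgn σ = 1 := by
  unfold sgn
  rcases Int.units_eq_one_or (Equiv.Perm.sign σ) with h | h <;> rw [h] <;> norm_num

lemma sgn_symm {m : ℕ} (σ : Equiv.Perm (Fin m)) : sgn σ.symm = sgn σ := by
  unfold sgn
  rw [Equiv.Perm.sign_symm]

lemma sgn_cycleRange {m : ℕ} (j : Fin m) :
    sgn (Fin.cycleRange j) = (-1 : ℝ) ^ (j : ℕ) := by
  unfold sgn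
  rw [Fin.sign_cycleRange]
  push_cast
  rfl

/-- the `dfsum` without the allowedness guard -/
noncomputable def dfsum {m : ℕ} (f : (Fin m → V) → ℝ) : (Fin (m + 1) → V) → ℝ :=
  fun v => ∑ j : Fin (m + 1), (-1 : ℝ) ^ (j : ℕ) * f (v ∘ Fin.succAbove j)

lemma cobound_eq_dfsum {K : Finset (Finset V)} {m : ℕ} (f : (Fin m → V) → ℝ)
    (v : Fin (m + 1) → V) :
    cobound K f v = if Allowed K v then dfsum f v else 0 := rfl

/-- key identity: `m! · dfsum f v = ∑_σ sign σ · f (v ∘ σ ∘ succ)` -/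
lemma dfsum_eq_perm_sum {m : ℕ} {f : (Fin m → V) → ℝ}
    (hf : ∀ (σ : Equiv.Perm (Fin m)) (v : Fin m → V),
      f (v ∘ σ) = ((Equiv.Perm.sign σ : ℤ) : ℝ) * f v) (v : Fin (m + 1) → V) :
    (m.factorial : ℝ) * dfsum f v
      = ∑ σ : Equiv.Perm (Fin (m + 1)), sgn σ * f (v ∘ σ ∘ Fin.succ) := by
  have hf' : ∀ (σ : Equiv.Perm (Fin m)) (w : Fin m → V), f (w ∘ σ) = sgn σ * f w := hf
  rw [← Equiv.sum_comp (Equiv.Perm.decomposeFin.symm)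
    (fun σ => sgn σ * f (v ∘ σ ∘ Fin.succ))]
  rw [Fintype.sum_prod_type]
  have key : ∀ (j : Fin (m + 1)) (e : Equiv.Perm (Fin m)),
      sgn (Equiv.Perm.decomposeFin.symm (j, e))
          * f (v ∘ (Equiv.Perm.decomposeFin.symm (j, e)) ∘ Fin.succ)
        = (-1 : ℝ) ^ (j : ℕ) * f (v ∘ Fin.succAbove j) := by
    intro j e
    have harg : v ∘ (Equiv.Perm.decomposeFin.symm (j, e)) ∘ Fin.succ
        = (v ∘ (Equiv.swap 0 j) ∘ Fin.succ) ∘ e := by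
      funext k
      simp [Equiv.Perm.decomposeFin_symm_apply_succ]
    have hsgn : sgn (Equiv.Perm.decomposeFin.symm (j, e))
        = (if j = 0 then (1:ℝ) else -1) * sgn e := by
      unfold sgn
      rw [Equiv.Perm.decomposeFin.symm_sign]
      split <;> push_cast <;> simp
    rw [harg, hf' e, hsgn]
    have main : (if j = 0 then (1:ℝ) else -1) * f (v ∘ (Equiv.swap 0 j) ∘ Fin.succ)
        = (-1 : ℝ) ^ (j : ℕ) * f (v ∘ Fin.succAbove j) := by
      induction j using Fin.cases with
      | zero =>
        rw [if_pos rfl]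
        simp only [Fin.val_zero, pow_zero, Fin.succAbove_zero, Equiv.swap_self]
        congr 1
      | succ l =>
        rw [if_neg (Fin.succ_ne_zero l)]
        have harg2 : v ∘ (Equiv.swap 0 l.succ) ∘ Fin.succ
            = (v ∘ Fin.succAbove l.succ) ∘ (Fin.cycleRange l) := by
          funext k
          simp only [Function.comp_apply]
          rw [← Fin.succAbove_cycleRange]
        rw [harg2, hf' (Fin.cycleRange l), sgn_cycleRange, Fin.val_succ, pow_succ]
        ring
    calc (if j = 0 then (1:ℝ) else -1) * sgn e * (sgn e * f (v ∘ (Equiv.swap 0 j) ∘ Fin.succ))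
        = (sgn e * sgn e) * ((if j = 0 then (1:ℝ) else -1) * f (v ∘ (Equiv.swap 0 j) ∘ Fin.succ)) := by ring
      _ = (-1 : ℝ) ^ (j : ℕ) * f (v ∘ Fin.succAbove j) := by rw [sgn_sq, one_mul, main]
  calc (m.factorial : ℝ) * dfsum f v
      = ∑ j : Fin (m + 1), ∑ _e : Equiv.Perm (Fin m),
          ((m.factorial : ℝ))⁻¹ * (m.factorial : ℝ) * ((-1:ℝ)^(j:ℕ) * f (v ∘ Fin.succAbove j)) := by
        simp only [Finset.sum_const, Finset.card_univ, Fintype.card_perm, Fintype.card_fin,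
          nsmul_eq_mul]
        rw [dfsum, Finset.mul_sum]
        apply Finset.sum_congr rfl
        intro j _
        have : (m.factorial : ℝ) ≠ 0 := Nat.cast_ne_zero.2 (Nat.factorial_ne_zero m)
        field_simp
    _ = ∑ j : Fin (m + 1), ∑ e : Equiv.Perm (Fin m),
          sgn (Equiv.Perm.decomposeFin.symm (j, e))
          * f (v ∘ (Equiv.Perm.decomposeFin.symm (j, e)) ∘ Fin.succ) := by
        refine Finset.sum_congr rfl fun j _ => Finset.sum_congr rfl fun e _ => ?_
        rw [key]
        have : (m.factorial : ℝ) ≠ 0 := Nat.cast_ne_zero.2 (Nat.factorial_ne_zero m)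
        field_simp

/-- `dfsum f` is alternating whenever `f` is -/
lemma dfsum_alt {m : ℕ} {f : (Fin m → V) → ℝ}
    (hf : ∀ (σ : Equiv.Perm (Fin m)) (v : Fin m → V),
      f (v ∘ σ) = ((Equiv.Perm.sign σ : ℤ) : ℝ) * f v)
    (π : Equiv.Perm (Fin (m + 1))) (v : Fin (m + 1) → V) :
    dfsum f (v ∘ π) = ((Equiv.Perm.sign π : ℤ) : ℝ) * dfsum f v := by
  have hfac : (m.factorial : ℝ) ≠ 0 := Nat.cast_ne_zero.2 (Nat.factorial_ne_zero m)
  have hπ : ((Equiv.Perm.sign π : ℤ) : ℝ) = sgn π := rfl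
  rw [hπ]
  apply mul_left_cancel₀ hfac
  rw [dfsum_eq_perm_sum hf]
  have step1 : ∑ σ : Equiv.Perm (Fin (m + 1)), sgn σ * f ((v ∘ π) ∘ σ ∘ Fin.succ)
      = ∑ σ : Equiv.Perm (Fin (m + 1)), sgn (π⁻¹ * σ) * f (v ∘ σ ∘ Fin.succ) := by
    rw [← Equiv.sum_comp (Equiv.mulLeft π)
      (fun σ => sgn (π⁻¹ * σ) * f (v ∘ σ ∘ Fin.succ))]
    apply Finset.sum_congr rfl
    intro σ _
    simp only [Equiv.coe_mulLeft]
    rw [inv_mul_cancel_left]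
    congr 2
  rw [step1]
  have step2 : ∀ σ : Equiv.Perm (Fin (m + 1)), sgn (π⁻¹ * σ) = sgn π * sgn σ := by
    intro σ
    rw [sgn_mul]
    congr 1
    unfold sgn
    rw [map_inv]
    rcases Int.units_eq_one_or (Equiv.Perm.sign π) with h | h <;> rw [h] <;> norm_num
  calc ∑ σ : Equiv.Perm (Fin (m + 1)), sgn (π⁻¹ * σ) * f (v ∘ σ ∘ Fin.succ)
      = sgn π * ∑ σ : Equiv.Perm (Fin (m + 1)), sgn σ * f (v ∘ σ ∘ Fin.succ) := by
        rw [Finset.mul_sum]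
        exact Finset.sum_congr rfl fun σ _ => by rw [step2 σ]; ring
    _ = sgn π * ((m.factorial : ℝ) * dfsum f v) := by rw [dfsum_eq_perm_sum hf]
    _ = (m.factorial : ℝ) * (sgn π * dfsum f v) := by ring

lemma cobound_isCochain {K : Finset (Finset V)} {m : ℕ} {f : (Fin m → V) → ℝ}
    (hf : IsCochain K m f) : IsCochain K (m + 1) (cobound K f) := by
  constructor
  · intro σ v
    rw [cobound_eq_dfsum, cobound_eq_dfsum]
    by_cases h : Allowed K v
    · rw [if_pos h, if_pos ((allowed_comp_perm σ v).2 h), dfsum_alt hf.1]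
    · rw [if_neg h, if_neg (fun hc => h ((allowed_comp_perm σ v).1 hc)), mul_zero]
  · intro v hv
    rw [cobound_eq_dfsum, if_neg hv]

lemma cons_comp_decompose {m : ℕ} (u : V) (s : Fin m → V) (σ : Equiv.Perm (Fin m)) :
    (Fin.cons u (s ∘ σ) : Fin (m + 1) → V)
      = (Fin.cons u s : Fin (m + 1) → V) ∘ (Equiv.Perm.decomposeFin.symm (0, σ)) := by
  funext k
  induction k using Fin.cases with
  | zero => simp [Equiv.Perm.decomposeFin_symm_apply_zero]
  | succ k' => simp [Equiv.Perm.decomposeFin_symm_apply_succ]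

lemma tau_isCochain {K : Finset (Finset V)} (hcplx : IsComplex K) {m : ℕ}
    {f : (Fin (m + 1) → V) → ℝ} (hf : IsCochain K (m + 1) f) (u : V) :
    IsCochain (linkK K u) m (tau K u f) := by
  constructor
  · intro σ s
    unfold tau
    by_cases h : Allowed (linkK K u) s
    · rw [if_pos h, if_pos ((allowed_comp_perm σ s).2 h)]
      rw [cons_comp_decompose, hf.1, Equiv.Perm.decomposeFin.symm_sign, if_pos rfl, one_mul]
    · rw [if_neg h, if_neg (fun hc => h ((allowed_comp_perm σ s).1 hc)), mul_zero]
  · intro s hs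
    unfold tau
    rw [if_neg hs]

/-- slot symmetry: moving the removed index via `cycleRange` -/
lemma sum_slot {K : Finset (Finset V)} {n' m : ℕ} {f : (Fin m → V) → ℝ}
    {g : (Fin (m + 1) → V) → ℝ}
    (hg : ∀ (σ : Equiv.Perm (Fin (m + 1))) (v : Fin (m + 1) → V),
      g (v ∘ σ) = ((Equiv.Perm.sign σ : ℤ) : ℝ) * g v)
    (j : Fin (m + 1)) :
    ∑ t : Fin (m + 1) → V, (wt K n' (Finset.image t Finset.univ) : ℝ) * g t
        * ((-1 : ℝ) ^ (j : ℕ) * f (t ∘ Fin.succAbove j))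
      = ∑ t : Fin (m + 1) → V, (wt K n' (Finset.image t Finset.univ) : ℝ) * g t
        * f (t ∘ Fin.succ) := by
  rw [← sum_comp_perm (Fin.cycleRange j).symm
    (fun t => (wt K n' (Finset.image t Finset.univ) : ℝ) * g t * f (t ∘ Fin.succ))]
  apply Finset.sum_congr rfl
  intro t _
  have harg : (t ∘ (Fin.cycleRange j).symm) ∘ Fin.succ = t ∘ Fin.succAbove j := by
    funext a
    simp only [Function.comp_apply]
    rw [Fin.cycleRange_symm_succ]
  rw [harg, image_comp_perm, hg ((Fin.cycleRange j).symm) t]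
  have : ((Equiv.Perm.sign ((Fin.cycleRange j).symm) : ℤ) : ℝ) = (-1 : ℝ) ^ (j : ℕ) := by
    have h1 : ((Equiv.Perm.sign ((Fin.cycleRange j).symm) : ℤ) : ℝ) = sgn ((Fin.cycleRange j).symm) := rfl
    rw [h1, sgn_symm, sgn_cycleRange]
  rw [this]
  ring

lemma cons_comp_succ {m : ℕ} (x : V) (s : Fin m → V) :
    (Fin.cons x s : Fin (m + 1) → V) ∘ Fin.succ = s := by
  funext k; simp

/-- the δ-pairing formula: `(δg, f) = (∑_t w(t)·g(t)·f(t∘succ))/m!` -/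
lemma codiff_pairing {K : Finset (Finset V)} {n' m : ℕ} (hm : 0 < m)
    (hcplx : IsComplex K) (hw : ∀ s ∈ K, 1 ≤ wt K n' s)
    {f : (Fin m → V) → ℝ} (hf0 : ∀ v, ¬ Allowed K v → f v = 0)
    {g : (Fin (m + 1) → V) → ℝ} (hg0 : ∀ t, ¬ Allowed K t → g t = 0) :
    innerC K n' m (codiff K n' g) f
      = (∑ t : Fin (m + 1) → V,
          (wt K n' (Finset.image t Finset.univ) : ℝ) * g t * f (t ∘ Fin.succ))
        / (m.factorial : ℝ) := by
  rw [innerC]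
  congr 1
  rw [sum_cons_split (fun t => (wt K n' (Finset.image t Finset.univ) : ℝ) * g t * f (t ∘ Fin.succ))]
  rw [Finset.sum_comm]
  apply Finset.sum_congr rfl
  intro s _
  rw [codiff, Finset.mul_sum, Finset.sum_mul]
  apply Finset.sum_congr rfl
  intro x _
  rw [cons_comp_succ, image_cons]
  by_cases h : Allowed K (Fin.cons x s)
  · rw [if_pos h]
    have hsK : Finset.image s Finset.univ ∈ K := (allowed_cons_tail hcplx hm h).2
    have hw' : (wt K n' (Finset.image s Finset.univ) : ℝ) ≠ 0 := by
      have := hw _ hsK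
      positivity
    have himg : Finset.image (Fin.cons x s : Fin (m+1) → V) Finset.univ
        = insert x (Finset.image s Finset.univ) := image_cons x s
    rw [← himg]
    field_simp
  · rw [if_neg h]
    have : g (Fin.cons x s) = 0 := hg0 _ h
    rw [this]
    ring

/-- pointwise: `df t · df t = df t · dfsum t` -/
lemma cobound_sq {K : Finset (Finset V)} {m : ℕ} (f : (Fin m → V) → ℝ)
    (t : Fin (m + 1) → V) : cobound K f t * cobound K f t = cobound K f t * dfsum f t := by
  rw [cobound_eq_dfsum]
  by_cases h : Allowed K t
  · rw [if_pos h]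
  · rw [if_neg h, zero_mul, zero_mul]

/-- adjointness: `(Δf, f) = (df, df) = T/m!` with `T = ∑_t w(t)·(df)(t)·f(t∘succ)`. -/
lemma lap_pairing {K : Finset (Finset V)} {n' m : ℕ} (hm : 0 < m)
    (hcplx : IsComplex K) (hw : ∀ s ∈ K, 1 ≤ wt K n' s)
    {f : ((Fin m) → V) → ℝ} (hf : IsCochain K m f) :
    innerC K n' m (lap K n' f) f
      = (∑ t : Fin (m + 1) → V,
          (wt K n' (Finset.image t Finset.univ) : ℝ) * cobound K f t * f (t ∘ Fin.succ))
        / (m.factorial : ℝ) :=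
  codiff_pairing hm hcplx hw hf.2 (cobound_isCochain hf).2

lemma cobound_sq_sum {K : Finset (Finset V)} {n' m : ℕ}
    {f : ((Fin m) → V) → ℝ} (hf : IsCochain K m f) :
    ∑ t : Fin (m + 1) → V,
      (wt K n' (Finset.image t Finset.univ) : ℝ) * cobound K f t * cobound K f t
      = (m + 1 : ℝ) * ∑ t : Fin (m + 1) → V,
          (wt K n' (Finset.image t Finset.univ) : ℝ) * cobound K f t * f (t ∘ Fin.succ) := by
    have h2 : ∀ t : Fin (m + 1) → V,
        (wt K n' (Finset.image t Finset.univ) : ℝ) * cobound K f t * cobound K f t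
          = ∑ j : Fin (m + 1), (wt K n' (Finset.image t Finset.univ) : ℝ) * cobound K f t
              * ((-1 : ℝ) ^ (j : ℕ) * f (t ∘ Fin.succAbove j)) := by
      intro t
      rw [mul_assoc, cobound_sq, dfsum, Finset.mul_sum, Finset.mul_sum]
      exact Finset.sum_congr rfl fun j _ => by ring
    rw [Finset.sum_congr rfl fun t _ => h2 t, Finset.sum_comm]
    rw [Finset.sum_congr rfl fun j _ => sum_slot (cobound_isCochain hf).1 j]
    rw [Finset.sum_const, Finset.card_univ, Fintype.card_fin, nsmul_eq_mul]
    push_cast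
    ring

lemma cobound_selfinner {K : Finset (Finset V)} {n' m : ℕ}
    {f : ((Fin m) → V) → ℝ} (hf : IsCochain K m f) :
    innerC K n' (m + 1) (cobound K f) (cobound K f)
      = (∑ t : Fin (m + 1) → V,
          (wt K n' (Finset.image t Finset.univ) : ℝ) * cobound K f t * f (t ∘ Fin.succ))
        / (m.factorial : ℝ) := by
  rw [innerC, cobound_sq_sum hf]
  rw [Nat.factorial_succ]
  push_cast
  have hfac : (m.factorial : ℝ) ≠ 0 := Nat.cast_ne_zero.2 (Nat.factorial_ne_zero m)
  field_simp

lemma cons_comp_succAbove {m : ℕ} (u : V) (v : Fin (m + 1) → V) (l : Fin (m + 1)) :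
    (Fin.cons u v : Fin (m + 2) → V) ∘ Fin.succAbove l.succ
      = Fin.cons u (v ∘ Fin.succAbove l) := by
  funext k
  induction k using Fin.cases with
  | zero => simp [Fin.succ_succAbove_zero]
  | succ k' => simp [Fin.succ_succAbove_succ]

lemma cobound_tau {K : Finset (Finset V)} (hcplx : IsComplex K) {i : ℕ} (hi : 0 < i)
    {u : V} {f : (Fin (i + 1) → V) → ℝ}
    {v : Fin (i + 1) → V} (hv : Allowed (linkK K u) v) :
    cobound (linkK K u) (tau K u f) v = f v - cobound K f (Fin.cons u v) := by
  have hKv : Allowed K (Fin.cons u v) := (allowed_cons_iff_link hcplx (Nat.succ_pos i) u v).1 hv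
  rw [cobound_eq_dfsum, if_pos hv, cobound_eq_dfsum, if_pos hKv]
  rw [dfsum, dfsum, Fin.sum_univ_succ
    (f := fun j : Fin (i + 2) => (-1 : ℝ) ^ (j : ℕ)
      * f ((Fin.cons u v : Fin (i + 2) → V) ∘ Fin.succAbove j))]
  have h0 : (Fin.cons u v : Fin (i + 2) → V) ∘ Fin.succAbove 0 = v := by
    rw [Fin.succAbove_zero]; exact cons_comp_succ u v
  rw [h0]
  simp only [Fin.val_zero, pow_zero, one_mul]
  have hterm : ∀ l : Fin (i + 1),
      (-1 : ℝ) ^ ((l.succ : Fin (i + 2)) : ℕ)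
          * f ((Fin.cons u v : Fin (i + 2) → V) ∘ Fin.succAbove l.succ)
        = -((-1 : ℝ) ^ (l : ℕ) * (tau K u f) (v ∘ Fin.succAbove l)) := by
    intro l
    rw [cons_comp_succAbove, tau, if_pos (allowed_comp_inj (linkK_isComplex hcplx u) hi hv
      (Fin.succAbove_right_injective))]
    rw [Fin.val_succ, pow_succ]
    ring
  rw [Finset.sum_congr rfl fun l _ => hterm l, Finset.sum_neg_distrib]
  ring

lemma wt_linkK_tuple {K : Finset (Finset V)} (hcplx : IsComplex K) {n : ℕ} (hn : 1 ≤ n)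
    {m : ℕ} (hm : 0 < m) {u : V} {v : Fin m → V} (hv : Allowed (linkK K u) v) :
    wt (linkK K u) (n - 1) (Finset.image v Finset.univ)
      = wt K n (Finset.image (Fin.cons u v : Fin (m + 1) → V) Finset.univ) := by
  have hus : u ∉ Finset.image v Finset.univ := by
    have := hv.2
    rw [linkK, Finset.mem_filter] at this
    exact this.2.1
  rw [image_cons]
  exact wt_linkK hcplx hn hus (image_tuple_nonempty hm v)

lemma allowed_cons_iff_insert {K : Finset (Finset V)} {m : ℕ} {s : Fin m → V}
    (hs : Allowed K s) (x : V) :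
    Allowed K (Fin.cons x s) ↔
      (x ∉ Finset.image s Finset.univ ∧ insert x (Finset.image s Finset.univ) ∈ K) := by
  constructor
  · rintro ⟨hinj, hmem⟩
    rw [cons_injective_iff] at hinj
    rw [image_cons] at hmem
    refine ⟨?_, hmem⟩
    rw [mem_image_tuple]
    rintro ⟨k, hk⟩
    exact hinj.2 k hk
  · rintro ⟨hx, hmem⟩
    refine ⟨cons_injective_iff.2 ⟨hs.1, fun k hk => hx (mem_image_tuple.2 ⟨k, hk⟩)⟩, ?_⟩
    rwa [image_cons]

/-- diagonal counting: `∑_t [t allowed]·w(t)·f(t∘succ)² = (n-i)·∑_s w(s)·f(s)²`. -/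
lemma sum_diag {K : Finset (Finset V)} (hcplx : IsComplex K) {n i : ℕ} (hin : i + 1 ≤ n)
    {f : (Fin (i + 1) → V) → ℝ} (hf : IsCochain K (i + 1) f) :
    ∑ t : Fin (i + 2) → V, (if Allowed K t then
        (wt K n (Finset.image t Finset.univ) : ℝ) * (f (t ∘ Fin.succ) * f (t ∘ Fin.succ))
      else 0)
      = ((n : ℝ) - i) * ∑ s : Fin (i + 1) → V,
          (wt K n (Finset.image s Finset.univ) : ℝ) * f s * f s := by
  rw [sum_cons_split, Finset.sum_comm, Finset.mul_sum]
  apply Finset.sum_congr rfl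
  intro s _
  by_cases hfs : f s = 0
  · rw [Finset.sum_congr rfl fun x _ => ?_, Finset.sum_const, smul_zero]
    · rw [hfs]; ring
    · rw [cons_comp_succ, hfs]
      split <;> ring
  · have hAs : Allowed K s := by
      by_contra hc
      exact hfs (hf.2 s hc)
    have hskey : ∑ x : V, (if Allowed K (Fin.cons x s) then
        (wt K n (Finset.image (Fin.cons x s : Fin (i+2) → V) Finset.univ) : ℝ) else 0)
        = ((n : ℝ) - i) * (wt K n (Finset.image s Finset.univ) : ℝ) := by
      have hconv : ∀ x : V, (if Allowed K (Fin.cons x s) then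
          (wt K n (Finset.image (Fin.cons x s : Fin (i+2) → V) Finset.univ) : ℝ) else 0)
          = ((if x ∉ Finset.image s Finset.univ ∧ insert x (Finset.image s Finset.univ) ∈ K
              then wt K n (insert x (Finset.image s Finset.univ)) else 0 : ℕ) : ℝ) := by
        intro x
        rw [if_congr (allowed_cons_iff_insert hAs x) rfl rfl]
        split
        · rw [image_cons]
        · rw [Nat.cast_zero]
      rw [Finset.sum_congr rfl fun x _ => hconv x, ← Nat.cast_sum]
      have hcard : (Finset.image s Finset.univ).card = i + 1 := by
        rw [Finset.card_image_of_injective _ hAs.1, Finset.card_univ, Fintype.card_fin]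
      rw [wt_insert_sum hcplx hAs.2 hcard]
      have h1 : n + 1 - (i + 1) = n - i := by omega
      rw [h1, Nat.cast_mul, Nat.cast_sub (by omega : i ≤ n)]
    calc ∑ x : V, (if Allowed K (Fin.cons x s) then
          (wt K n (Finset.image (Fin.cons x s : Fin (i+2) → V) Finset.univ) : ℝ)
            * (f ((Fin.cons x s : Fin (i+2) → V) ∘ Fin.succ)
              * f ((Fin.cons x s : Fin (i+2) → V) ∘ Fin.succ)) else 0)
        = (∑ x : V, (if Allowed K (Fin.cons x s) then
            (wt K n (Finset.image (Fin.cons x s : Fin (i+2) → V) Finset.univ) : ℝ) else 0))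
            * (f s * f s) := by
          rw [Finset.sum_mul]
          apply Finset.sum_congr rfl
          intro x _
          rw [cons_comp_succ]
          split <;> ring
      _ = ((n : ℝ) - i) * ((wt K n (Finset.image s Finset.univ) : ℝ) * f s * f s) := by
          rw [hskey]; ring

lemma wt_linkK_empty {K : Finset (Finset V)} (hcplx : IsComplex K) {u : V}
    (hu : u ∉ verts K) (n' : ℕ) (s : Finset V) : wt (linkK K u) n' s = 0 := by
  rw [linkK_empty hcplx hu, wt, Finset.filter_empty, Finset.card_empty]

lemma innerC_linkK_zero {K : Finset (Finset V)} (hcplx : IsComplex K) {u : V}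
    (hu : u ∉ verts K) (n' m : ℕ) (f g : (Fin m → V) → ℝ) :
    innerC (linkK K u) n' m f g = 0 := by
  rw [innerC]
  rw [Finset.sum_congr rfl fun v _ => by
    rw [wt_linkK_empty hcplx hu, Nat.cast_zero, zero_mul, zero_mul]]
  rw [Finset.sum_const, smul_zero, zero_div]

/-- localization of the norm -/
lemma norm_localization {K : Finset (Finset V)} (hcplx : IsComplex K) {n i : ℕ}
    (hn : 1 ≤ n) (hi : 0 < i) {f : (Fin (i + 1) → V) → ℝ} (hf : IsCochain K (i + 1) f) :
    ∑ u : V, innerC (linkK K u) (n - 1) i (tau K u f) (tau K u f)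
      = ((i : ℝ) + 1) * innerC K n (i + 1) f f := by
  have key : ∀ (u : V) (s : Fin i → V),
      (wt (linkK K u) (n - 1) (Finset.image s Finset.univ) : ℝ) * tau K u f s * tau K u f s
      = (wt K n (Finset.image (Fin.cons u s : Fin (i+1) → V) Finset.univ) : ℝ)
          * f (Fin.cons u s) * f (Fin.cons u s) := by
    intro u s
    by_cases h : Allowed (linkK K u) s
    · rw [tau, if_pos h, wt_linkK_tuple hcplx hn hi h]
    · rw [tau, if_neg h]
      have hfz : f (Fin.cons u s) = 0 :=
        hf.2 _ fun hc => h ((allowed_cons_iff_link hcplx hi u s).2 hc)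
      rw [hfz]
      ring
  have hnum : ∑ u : V, ∑ s : Fin i → V,
      (wt (linkK K u) (n - 1) (Finset.image s Finset.univ) : ℝ) * tau K u f s * tau K u f s
      = ∑ t : Fin (i + 1) → V,
          (wt K n (Finset.image t Finset.univ) : ℝ) * f t * f t := by
    rw [Finset.sum_congr rfl fun u _ => Finset.sum_congr rfl fun s _ => key u s]
    rw [← sum_cons_split (fun t => (wt K n (Finset.image t Finset.univ) : ℝ) * f t * f t)]
  calc ∑ u : V, innerC (linkK K u) (n - 1) i (tau K u f) (tau K u f)
      = (∑ u : V, ∑ s : Fin i → V,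
          (wt (linkK K u) (n - 1) (Finset.image s Finset.univ) : ℝ) * tau K u f s * tau K u f s)
          / (i.factorial : ℝ) := by
        rw [Finset.sum_div]
        exact Finset.sum_congr rfl fun u _ => by rw [innerC]
    _ = (∑ t : Fin (i + 1) → V,
          (wt K n (Finset.image t Finset.univ) : ℝ) * f t * f t) / (i.factorial : ℝ) := by
        rw [hnum]
    _ = ((i : ℝ) + 1) * innerC K n (i + 1) f f := by
        rw [innerC, Nat.factorial_succ]
        have hfac : (i.factorial : ℝ) ≠ 0 := Nat.cast_ne_zero.2 (Nat.factorial_ne_zero i)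
        push_cast
        field_simp

/-- localization of the Dirichlet form -/
lemma dirichlet_localization {K : Finset (Finset V)} (hcplx : IsComplex K) {n i : ℕ}
    (hpure : IsPureDim K n) (hi : 1 ≤ i) (hin : i + 1 ≤ n)
    {f : (Fin (i + 1) → V) → ℝ} (hf : IsCochain K (i + 1) f) :
    ∑ u : V, innerC (linkK K u) (n - 1) i (lap (linkK K u) (n - 1) (tau K u f)) (tau K u f)
      = ((n : ℝ) - i) * innerC K n (i + 1) f f
        + (i : ℝ) * innerC K n (i + 1) (lap K n f) f := by
  have hn : 1 ≤ n := by omega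
  have hwK : ∀ s ∈ K, 1 ≤ wt K n s := fun s hs => wt_pos hpure hs
  have hw_link : ∀ u : V, ∀ s ∈ linkK K u, 1 ≤ wt (linkK K u) (n - 1) s := by
    intro u s hs
    have hmem := hs
    rw [linkK, Finset.mem_filter] at hmem
    rw [wt_linkK hcplx hn hmem.2.1 (hcplx.1 s hmem.1)]
    exact wt_pos hpure hmem.2.2
  -- step 1 : rewrite each link inner product as the self inner product of the coboundary
  have step1 : ∀ u : V,
      innerC (linkK K u) (n - 1) i (lap (linkK K u) (n - 1) (tau K u f)) (tau K u f)
        = innerC (linkK K u) (n - 1) (i + 1) (cobound (linkK K u) (tau K u f))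
            (cobound (linkK K u) (tau K u f)) := by
    intro u
    rw [lap_pairing hi (linkK_isComplex hcplx u) (hw_link u) (tau_isCochain hcplx hf u),
      cobound_selfinner (tau_isCochain hcplx hf u)]
  -- the global integrand
  set G : (Fin (i + 2) → V) → ℝ := fun t => if Allowed K t then
      (wt K n (Finset.image t Finset.univ) : ℝ)
        * (f (t ∘ Fin.succ) - cobound K f t) ^ 2 else 0 with hG
  -- step 2 : pointwise identification of the link integrand
  have step2 : ∀ (u : V) (v : Fin (i + 1) → V),
      (wt (linkK K u) (n - 1) (Finset.image v Finset.univ) : ℝ)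
          * cobound (linkK K u) (tau K u f) v * cobound (linkK K u) (tau K u f) v
        = G (Fin.cons u v) := by
    intro u v
    by_cases h : Allowed (linkK K u) v
    · have hKv : Allowed K (Fin.cons u v) := (allowed_cons_iff_link hcplx (by omega) u v).1 h
      rw [hG]
      simp only [if_pos hKv]
      rw [cobound_tau hcplx hi h, wt_linkK_tuple hcplx hn (by omega) h, cons_comp_succ]
      ring
    · have hKv : ¬ Allowed K (Fin.cons u v) :=
        fun hc => h ((allowed_cons_iff_link hcplx (by omega) u v).2 hc)
      rw [hG]
      simp only [if_neg hKv]
      rw [cobound_eq_dfsum, if_neg h]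
      ring
  -- step 3 : the three-term pointwise decomposition of G
  have step3 : ∀ t : Fin (i + 2) → V,
      G t = (if Allowed K t then
          (wt K n (Finset.image t Finset.univ) : ℝ) * (f (t ∘ Fin.succ) * f (t ∘ Fin.succ))
          else 0)
        - 2 * ((wt K n (Finset.image t Finset.univ) : ℝ) * cobound K f t * f (t ∘ Fin.succ))
        + (wt K n (Finset.image t Finset.univ) : ℝ) * cobound K f t * cobound K f t := by
    intro t
    rw [hG]
    by_cases h : Allowed K t
    · simp only [if_pos h]
      ring
    · simp only [if_neg h]
      rw [cobound_eq_dfsum, if_neg h]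
      ring
  -- notation for the two basic sums
  set T : ℝ := ∑ t : Fin (i + 2) → V,
      (wt K n (Finset.image t Finset.univ) : ℝ) * cobound K f t * f (t ∘ Fin.succ) with hT
  set S : ℝ := ∑ s : Fin (i + 1) → V,
      (wt K n (Finset.image s Finset.univ) : ℝ) * f s * f s with hS
  have hsumG : ∑ t : Fin (i + 2) → V, G t = ((n : ℝ) - i) * S - 2 * T + ((i : ℝ) + 2) * T := by
    rw [Finset.sum_congr rfl fun t _ => step3 t]
    rw [Finset.sum_add_distrib, Finset.sum_sub_distrib]
    congr 1
    · congr 1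
      · exact sum_diag hcplx hin hf
      · rw [← Finset.mul_sum]
    · have := cobound_sq_sum (n' := n) hf
      rw [this]
      push_cast
      ring
  -- put things together
  have hfaci : (i.factorial : ℝ) ≠ 0 := Nat.cast_ne_zero.2 (Nat.factorial_ne_zero i)
  have hfaci1 : ((i + 1).factorial : ℝ) ≠ 0 := Nat.cast_ne_zero.2 (Nat.factorial_ne_zero _)
  have hinner_ff : innerC K n (i + 1) f f = S / ((i + 1).factorial : ℝ) := by rw [innerC]
  have hinner_lap : innerC K n (i + 1) (lap K n f) f = T / ((i + 1).factorial : ℝ) := by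
    rw [lap_pairing (by omega : 0 < i + 1) hcplx hwK hf]
  calc ∑ u : V, innerC (linkK K u) (n - 1) i (lap (linkK K u) (n - 1) (tau K u f)) (tau K u f)
      = ∑ u : V, (∑ v : Fin (i + 1) → V,
          (wt (linkK K u) (n - 1) (Finset.image v Finset.univ) : ℝ)
            * cobound (linkK K u) (tau K u f) v * cobound (linkK K u) (tau K u f) v)
          / ((i + 1).factorial : ℝ) := by
        refine Finset.sum_congr rfl fun u _ => ?_
        rw [step1 u, innerC]
    _ = (∑ t : Fin (i + 2) → V, G t) / ((i + 1).factorial : ℝ) := by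
        rw [← Finset.sum_div]
        congr 1
        rw [Finset.sum_congr rfl fun u _ => Finset.sum_congr rfl fun v _ => step2 u v]
        rw [← sum_cons_split G]
    _ = (((n : ℝ) - i) * S + (i : ℝ) * T) / ((i + 1).factorial : ℝ) := by
        rw [hsumG]; ring_nf
    _ = ((n : ℝ) - i) * innerC K n (i + 1) f f
        + (i : ℝ) * innerC K n (i + 1) (lap K n f) f := by
        rw [hinner_ff, hinner_lap]
        field_simp

lemma innerC_smul {K : Finset (Finset V)} {n' m : ℕ} (c : ℝ) (f g : (Fin m → V) → ℝ) :
    innerC K n' m (c • f) g = c * innerC K n' m f g := by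
  rw [innerC, innerC, ← mul_div_assoc, Finset.mul_sum]
  congr 1
  apply Finset.sum_congr rfl
  intro v _
  simp only [Pi.smul_apply, smul_eq_mul]
  ring

lemma innerC_self_pos {K : Finset (Finset V)} {n' m : ℕ} (hpure : IsPureDim K n')
    {f : (Fin m → V) → ℝ} (hf : IsCochain K m f) (hne : f ≠ 0) :
    0 < innerC K n' m f f := by
  obtain ⟨t, ht⟩ : ∃ t, f t ≠ 0 := by
    by_contra hc
    push_neg at hc
    exact hne (funext hc)
  have hAt : Allowed K t := by
    by_contra hc
    exact ht (hf.2 t hc)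
  apply div_pos
  · apply Finset.sum_pos'
    · intro v _
      rw [mul_assoc]
      exact mul_nonneg (Nat.cast_nonneg _) (mul_self_nonneg _)
    · refine ⟨t, Finset.mem_univ t, ?_⟩
      rw [mul_assoc]
      exact mul_pos (Nat.cast_pos.2 (wt_pos hpure hAt.2)) (mul_self_pos.2 ht)
  · exact_mod_cast Nat.pos_of_ne_zero (Nat.factorial_ne_zero m)
end Aux5

/-- Fundamental Inequality, upper bound: if `λ > 0` bounds all the local
Rayleigh quotients on the links, then `i·(Δf,f) ≤ ((i+1)·λ - (n-i))·(f,f)` for every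
`f ∈ C^i(X)`; in particular every eigenvalue `c` of `Δ` on `C^i(X)` satisfies
`i·c ≤ (i+1)·λ - (n-i)`. -/
theorem fundamental_inequality_upper
    [Fintype V] [DecidableEq V] (K : Finset (Finset V)) (n i : ℕ)
    (hcplx : IsComplex K) (hpure : IsPureDim K n) (hi1 : 1 ≤ i) (hin : i + 1 ≤ n)
    (lam : ℝ) (hlampos : 0 < lam)
    (hlam : ∀ u ∈ verts K, ∀ g : (Fin i → V) → ℝ, IsCochain (linkK K u) i g →
      innerC (linkK K u) (n - 1) i (lap (linkK K u) (n - 1) g) g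
        ≤ lam * innerC (linkK K u) (n - 1) i g g) :
    (∀ f : (Fin (i + 1) → V) → ℝ, IsCochain K (i + 1) f →
      (i : ℝ) * innerC K n (i + 1) (lap K n f) f
        ≤ (((i : ℝ) + 1) * lam - ((n : ℝ) - (i : ℝ))) * innerC K n (i + 1) f f)
    ∧ ∀ c : ℝ, IsEigen K n (i + 1) c →
        (i : ℝ) * c ≤ ((i : ℝ) + 1) * lam - ((n : ℝ) - (i : ℝ)) := by
  have hn : 1 ≤ n := by omega
  have P1 : ∀ f : (Fin (i + 1) → V) → ℝ, IsCochain K (i + 1) f →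
      (i : ℝ) * innerC K n (i + 1) (lap K n f) f
        ≤ (((i : ℝ) + 1) * lam - ((n : ℝ) - (i : ℝ))) * innerC K n (i + 1) f f := by
    intro f hf
    have hsum_le : ∑ u ∈ verts K,
        innerC (linkK K u) (n - 1) i (lap (linkK K u) (n - 1) (tau K u f)) (tau K u f)
        ≤ ∑ u ∈ verts K, lam * innerC (linkK K u) (n - 1) i (tau K u f) (tau K u f) :=
      Finset.sum_le_sum fun u hu => hlam u hu _ (tau_isCochain hcplx hf u)
    have hext1 : ∑ u ∈ verts K,
        innerC (linkK K u) (n - 1) i (lap (linkK K u) (n - 1) (tau K u f)) (tau K u f)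
        = ∑ u : V,
        innerC (linkK K u) (n - 1) i (lap (linkK K u) (n - 1) (tau K u f)) (tau K u f) :=
      Finset.sum_subset (Finset.subset_univ _)
        (fun u _ hu => innerC_linkK_zero hcplx hu _ _ _ _)
    have hext2 : ∑ u ∈ verts K, innerC (linkK K u) (n - 1) i (tau K u f) (tau K u f)
        = ∑ u : V, innerC (linkK K u) (n - 1) i (tau K u f) (tau K u f) :=
      Finset.sum_subset (Finset.subset_univ _)
        (fun u _ hu => innerC_linkK_zero hcplx hu _ _ _ _)
    rw [hext1, dirichlet_localization hcplx hpure hi1 hin hf] at hsum_le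
    rw [← Finset.mul_sum, hext2, norm_localization hcplx hn hi1 hf] at hsum_le
    set F := innerC K n (i + 1) f f
    set L := innerC K n (i + 1) (lap K n f) f
    nlinarith [hsum_le]
  refine ⟨P1, ?_⟩
  rintro c ⟨f, hfne, hfco, heig⟩
  have h1 := P1 f hfco
  rw [heig, innerC_smul] at h1
  have hpos : 0 < innerC K n (i + 1) f f := innerC_self_pos hpure hfco hfne
  have h2 : (i : ℝ) * c * innerC K n (i + 1) f f
      ≤ (((i : ℝ) + 1) * lam - ((n : ℝ) - (i : ℝ))) * innerC K n (i + 1) f f := by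
    calc (i : ℝ) * c * innerC K n (i + 1) f f
        = (i : ℝ) * (c * innerC K n (i + 1) f f) := by ring
      _ ≤ _ := h1
  exact le_of_mul_le_mul_right h2 hpos
end

section
/- Let X be a finite n-dimensional simplicial complex satisfying condition (1_X), and suppose t : V → T is a function on the vertex set (a type function) such that the vertices of every simplex of X have pairwise distinct types. Fix α ∈ T and let g ∈ C^0(X) be a 0-cochain that vanishes on every vertex of type different from α. Then (Δg, g) = n·(g, g). -/
open Finset

open scoped Classical

variable {V : Type*}

section Helpers

variable [Fintype V] [DecidableEq V]

lemma img1 (s : Fin 1 → V) : Finset.image s Finset.univ = {s 0} := by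
  ext y
  simp [Fin.exists_fin_one, eq_comm]

lemma cons_one (x : V) (s : Fin 1 → V) : (Fin.cons x s : Fin 2 → V) 1 = s 0 := rfl

lemma img2 (x : V) (s : Fin 1 → V) :
    Finset.image (Fin.cons x s : Fin 2 → V) Finset.univ = insert x {s 0} := by
  ext y
  simp [Fin.exists_fin_two, cons_one, eq_comm]

lemma allowed_cons (K : Finset (Finset V)) (x : V) (s : Fin 1 → V) :
    Allowed K (Fin.cons x s) ↔ x ≠ s 0 ∧ insert x {s 0} ∈ K := by
  unfold Allowed
  rw [img2]
  constructor
  · rintro ⟨hinj, hmem⟩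
    refine ⟨fun h => ?_, hmem⟩
    have h01 : (0 : Fin 2) = 1 := hinj (by simp [cons_one, h])
    simp at h01
  · rintro ⟨hne, hmem⟩
    refine ⟨fun i j hij => ?_, hmem⟩
    fin_cases i <;> fin_cases j <;> simp_all [cons_one]

lemma allowed_one (K : Finset (Finset V)) (s : Fin 1 → V) :
    Allowed K s ↔ {s 0} ∈ K := by
  unfold Allowed
  rw [img1]
  exact ⟨fun h => h.2, fun h => ⟨fun a b _ => Subsingleton.elim a b, h⟩⟩

lemma wt_ne_zero (K : Finset (Finset V)) (n : ℕ) (hpure : IsPureDim K n)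
    {s : Finset V} (hs : s ∈ K) : wt K n s ≠ 0 := by
  obtain ⟨u, hu, hsub, hcard⟩ := hpure.2 s hs
  exact Finset.card_ne_zero_of_mem (Finset.mem_filter.2 ⟨hu, hsub, hcard⟩)

lemma cnt (K : Finset (Finset V)) (n : ℕ) (hcplx : IsComplex K) (v : V) :
    ∑ x : V, (if x ≠ v ∧ insert x {v} ∈ K then wt K n (insert x {v}) else 0)
      = n * wt K n {v} := by
  unfold wt
  have hL : ∀ x : V,
      (if x ≠ v ∧ insert x {v} ∈ K then
        (K.filter fun u => insert x {v} ⊆ u ∧ u.card = n + 1).card else 0)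
      = ∑ u ∈ K, (if (x ≠ v ∧ insert x {v} ∈ K) ∧ insert x {v} ⊆ u ∧ u.card = n + 1
          then 1 else 0) := by
    intro x
    by_cases h : x ≠ v ∧ insert x {v} ∈ K
    · rw [if_pos h, Finset.card_filter]
      exact Finset.sum_congr rfl fun u _ => by simp [h.1, h.2]
    · simp [h]
  calc ∑ x : V, (if x ≠ v ∧ insert x {v} ∈ K then
          (K.filter fun u => insert x {v} ⊆ u ∧ u.card = n + 1).card else 0)
      = ∑ x : V, ∑ u ∈ K, (if (x ≠ v ∧ insert x {v} ∈ K) ∧ insert x {v} ⊆ u ∧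
          u.card = n + 1 then 1 else 0) := Finset.sum_congr rfl fun x _ => hL x
    _ = ∑ u ∈ K, ∑ x : V, (if (x ≠ v ∧ insert x {v} ∈ K) ∧ insert x {v} ⊆ u ∧
          u.card = n + 1 then 1 else 0) := Finset.sum_comm
    _ = ∑ u ∈ K, (if v ∈ u ∧ u.card = n + 1 then n else 0) := by
        refine Finset.sum_congr rfl fun u hu => ?_
        by_cases h : v ∈ u ∧ u.card = n + 1
        · have hx : ∀ x : V,
              ((x ≠ v ∧ insert x {v} ∈ K) ∧ insert x {v} ⊆ u ∧ u.card = n + 1) ↔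
                x ∈ u.erase v := by
            intro x
            constructor
            · rintro ⟨⟨hxv, -⟩, hsub, -⟩
              exact Finset.mem_erase.2 ⟨hxv, hsub (Finset.mem_insert_self _ _)⟩
            · intro hx
              have hxv := (Finset.mem_erase.1 hx).1
              have hxu := (Finset.mem_erase.1 hx).2
              have hsub : insert x {v} ⊆ u := by
                intro y hy
                rcases Finset.mem_insert.1 hy with rfl | hy
                · exact hxu
                · rw [Finset.mem_singleton.1 hy]; exact h.1
              exact ⟨⟨hxv, hcplx.2 u hu _ hsub ⟨x, Finset.mem_insert_self _ _⟩⟩,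
                hsub, h.2⟩
          simp only [hx, if_pos h]
          rw [Finset.sum_ite_mem, Finset.univ_inter, Finset.sum_const, smul_eq_mul,
            mul_one, Finset.card_erase_of_mem h.1, h.2]
          omega
        · have hx : ∀ x : V,
              ¬((x ≠ v ∧ insert x {v} ∈ K) ∧ insert x {v} ⊆ u ∧ u.card = n + 1) := by
            intro x hx
            exact h ⟨hx.2.1 (by simp), hx.2.2⟩
          simp [hx, h]
    _ = n * (K.filter fun u => {v} ⊆ u ∧ u.card = n + 1).card := by
        rw [Finset.card_filter, Finset.mul_sum]
        refine Finset.sum_congr rfl fun u hu => ?_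
        by_cases h : v ∈ u ∧ u.card = n + 1 <;>
          simp [h, Finset.singleton_subset_iff]

end Helpers

/-- if `t : V → T` is a type function such that the vertices of every
simplex of `X` have pairwise distinct types, `α ∈ T`, and `g ∈ C^0(X)` vanishes on
every vertex whose type differs from `α`, then `(Δg, g) = n·(g,g)`. -/
theorem type_supported_cochain_rayleigh
    [Fintype V] [DecidableEq V] (K : Finset (Finset V)) (n : ℕ)
    (hcplx : IsComplex K) (hpure : IsPureDim K n)
    {T : Type*} (t : V → T) (ht : ∀ s ∈ K, Set.InjOn t (s : Set V))
    (α : T) (g : (Fin 1 → V) → ℝ) (hg : IsCochain K 1 g)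
    (hα : ∀ s : Fin 1 → V, t (s 0) ≠ α → g s = 0) :
    innerC K n 1 (lap K n g) g = (n : ℝ) * innerC K n 1 g g := by
  classical
  have key : ∀ s : Fin 1 → V,
      (wt K n (Finset.image s Finset.univ) : ℝ) * lap K n g s * g s
        = (n : ℝ) * ((wt K n (Finset.image s Finset.univ) : ℝ) * g s * g s) := by
    intro s
    rw [img1 s]
    have hterm : ∀ x : V,
        (wt K n {s 0} : ℝ) *
          (if Allowed K (Fin.cons x s) then
            ((wt K n (Finset.image (Fin.cons x s) Finset.univ) : ℝ) /
              (wt K n (Finset.image s Finset.univ) : ℝ)) * cobound K g (Fin.cons x s)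
          else 0) * g s
        = (if x ≠ s 0 ∧ insert x {s 0} ∈ K then (wt K n (insert x {s 0}) : ℝ) else 0) *
            (g s * g s) := by
      intro x
      by_cases hA : Allowed K (Fin.cons x s)
      · obtain ⟨hx, he⟩ := (allowed_cons K x s).1 hA
        have hs0K : ({s 0} : Finset V) ∈ K :=
          hcplx.2 _ he {s 0} (by simp) ⟨s 0, by simp⟩
        have hw : (wt K n {s 0} : ℝ) ≠ 0 :=
          Nat.cast_ne_zero.2 (wt_ne_zero K n hpure hs0K)
        have c0 : (Fin.cons x s ∘ Fin.succAbove 0 : Fin 1 → V) = s :=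
          funext fun i => by fin_cases i; rfl
        have c1 : (Fin.cons x s ∘ Fin.succAbove 1 : Fin 1 → V) = fun _ => x :=
          funext fun i => by fin_cases i; rfl
        have c1' : (Fin.cons x s ∘ Fin.succAbove (Fin.succ 0) : Fin 1 → V) = fun _ => x :=
          funext fun i => by fin_cases i; rfl
        have expand : cobound K g (Fin.cons x s) = g s - g (fun _ => x) := by
          unfold cobound
          rw [if_pos hA, Fin.sum_univ_succ, Fin.sum_univ_one, c0, c1']
          simp
          ring
        have hcross : g (fun _ => x) * g s = 0 := by
          by_cases h1 : t x = α
          · by_cases h2 : t (s 0) = α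
            · exact absurd (ht _ he (by simp) (by simp) (h1.trans h2.symm)) hx
            · rw [hα s h2, mul_zero]
          · rw [hα (fun _ => x) h1, zero_mul]
        rw [if_pos hA, expand, img2, img1, if_pos ⟨hx, he⟩]
        have heq : (wt K n {s 0} : ℝ) *
            ((wt K n (insert x {s 0}) : ℝ) / (wt K n {s 0} : ℝ) *
              (g s - g fun _ => x)) * g s
            = (wt K n (insert x {s 0}) : ℝ) * (g s * g s) -
              (wt K n (insert x {s 0}) : ℝ) * (g (fun _ => x) * g s) := by
          field_simp
        rw [heq, hcross, mul_zero, sub_zero]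
      · rw [if_neg hA, if_neg (fun h => hA ((allowed_cons K x s).2 h))]
        ring
    show (wt K n {s 0} : ℝ) * codiff K n (cobound K g) s * g s = _
    unfold codiff
    rw [Finset.mul_sum, Finset.sum_mul]
    rw [Finset.sum_congr rfl fun x _ => hterm x, ← Finset.sum_mul]
    by_cases hgs : g s = 0
    · simp [hgs]
    · have hcnt := cnt K n hcplx (s 0)
      have hcast : (∑ x : V, (if x ≠ s 0 ∧ insert x {s 0} ∈ K then
          (wt K n (insert x {s 0}) : ℝ) else 0)) = ((n : ℝ) * (wt K n {s 0} : ℝ)) := by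
        have : (∑ x : V, (if x ≠ s 0 ∧ insert x {s 0} ∈ K then
            (wt K n (insert x {s 0}) : ℝ) else 0))
            = ((∑ x : V, (if x ≠ s 0 ∧ insert x {s 0} ∈ K then
              wt K n (insert x {s 0}) else 0) : ℕ) : ℝ) := by
          push_cast [apply_ite (Nat.cast : ℕ → ℝ)]
          rfl
        rw [this, hcnt]
        push_cast
        ring
      rw [hcast]
      ring
  unfold innerC
  rw [Finset.sum_congr rfl fun s _ => key s, ← Finset.mul_sum]
  simp [Nat.factorial]
end
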